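/- Let C ⊆ F_{q^m}^n be an F_{q^m}-linear code. Then Tr(C)^{⋆2} ⊆ Σ_{i=0}^{⌊m/2⌋} Tr(C ⋆ C^{q^i}), where the right-hand side is the sum of the F_q-subspaces Tr(C ⋆ C^{q^i}) of F_q^n for i = 0, 1, …, ⌊m/2⌋. -/
import Mathlib


open Module

/-- The Schur (componentwise) product over `R` of two `R`-submodules of a commutative
`R`-algebra: the `R`-span of the set of products. For codes in `K^n` (with the pointwise
ring structure) this is the usual Schur product `C ⋆ D`. -/
def schurProd (R : Type*) {A : Type*} [CommSemiring R] [CommSemiring A] [Algebra R A]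
    (C D : Submodule R A) : Submodule R A :=
  Submodule.span R {x : A | ∃ c ∈ C, ∃ d ∈ D, x = c * d}

/-- The code `C^r := {(c₁^r, …, c_n^r) : c ∈ C}` of coordinatewise `r`-th powers
(as the span of that set). -/
def powCode {K : Type*} [Field K] {n : ℕ} (C : Submodule K (Fin n → K)) (r : ℕ) :
    Submodule K (Fin n → K) :=
  Submodule.span K {x : Fin n → K | ∃ c ∈ C, x = fun j => c j ^ r}

/-- The trace code `Tr(C)` over `F_q` of an `F_{q^m}`-linear code `C`: the `F_q`-span of the
coordinatewise traces `Tr(c) = (Tr(c₁), …, Tr(c_n))`, where `Tr(x) = x + x^q + ⋯ + x^{q^{m-1}}`. -/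
def traceCode (q m : ℕ) (Fq : Type*) [Field Fq] {Fqm : Type*} [Field Fqm] [Algebra Fq Fqm]
    {n : ℕ} (C : Submodule Fqm (Fin n → Fqm)) : Submodule Fq (Fin n → Fqm) :=
  Submodule.span Fq
    {x : Fin n → Fqm | ∃ c ∈ C, x = fun j => ∑ i ∈ Finset.range m, c j ^ q ^ i}

open Finset

section helpers
variable {Fqm : Type*} [Field Fqm] (q m : ℕ)

lemma tr_shift (hf : ∀ x : Fqm, x ^ q ^ m = x) (b : Fqm) (i : ℕ) :
    ∑ k ∈ range m, b ^ q ^ (i + k) = ∑ k ∈ range m, b ^ q ^ k := by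
  induction i with
  | zero => simp
  | succ i ih =>
    have h1 : ∑ k ∈ range (m + 1), b ^ q ^ (i + k)
        = (∑ k ∈ range m, b ^ q ^ (i + k)) + b ^ q ^ (i + m) :=
      Finset.sum_range_succ _ m
    have h2 : ∑ k ∈ range (m + 1), b ^ q ^ (i + k)
        = (∑ k ∈ range m, b ^ q ^ (i + (k + 1))) + b ^ q ^ (i + 0) :=
      Finset.sum_range_succ' _ m
    have hper : b ^ q ^ (i + m) = b ^ q ^ (i + 0) := by
      rw [Nat.add_zero, Nat.add_comm, pow_add, pow_mul, hf]
    rw [hper, h2] at h1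
    have h3 : ∑ k ∈ range m, b ^ q ^ (i + (k + 1)) = ∑ k ∈ range m, b ^ q ^ (i + k) :=
      add_right_cancel h1
    calc ∑ k ∈ range m, b ^ q ^ (i + 1 + k)
        = ∑ k ∈ range m, b ^ q ^ (i + (k + 1)) := by
          apply Finset.sum_congr rfl; intro k _; congr 2; omega
      _ = ∑ k ∈ range m, b ^ q ^ (i + k) := h3
      _ = ∑ k ∈ range m, b ^ q ^ k := ih

lemma tr_pow (hf : ∀ x : Fqm, x ^ q ^ m = x) (x : Fqm) (r : ℕ) :
    ∑ i ∈ range m, (x ^ q ^ r) ^ q ^ i = ∑ i ∈ range m, x ^ q ^ i := by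
  have : ∀ i, (x ^ q ^ r) ^ q ^ i = x ^ q ^ (r + i) := by
    intro i; rw [← pow_mul, ← pow_add]
  simp_rw [this]
  exact tr_shift q m hf x r

lemma key1 (hf : ∀ x : Fqm, x ^ q ^ m = x) (a b : Fqm) :
    (∑ i ∈ range m, a ^ q ^ i) * (∑ j ∈ range m, b ^ q ^ j)
      = ∑ k ∈ range m, ∑ i ∈ range m, (a * b ^ q ^ k) ^ q ^ i := by
  have h : ∀ k i, (a * b ^ q ^ k) ^ q ^ i = a ^ q ^ i * b ^ q ^ (i + k) := by
    intro k i
    rw [mul_pow, ← pow_mul, ← pow_add, Nat.add_comm k i]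
  simp_rw [h]
  rw [Finset.sum_comm]
  rw [Finset.sum_mul]
  apply Finset.sum_congr rfl
  intro i _
  rw [← Finset.mul_sum, tr_shift q m hf b i]

lemma key2 (hf : ∀ x : Fqm, x ^ q ^ m = x) (a b : Fqm) (k : ℕ) (hk : k ≤ m) :
    ∑ i ∈ range m, (a * b ^ q ^ k) ^ q ^ i
      = ∑ i ∈ range m, (b * a ^ q ^ (m - k)) ^ q ^ i := by
  have h : ((a * b ^ q ^ k) ^ q ^ (m - k)) = b * a ^ q ^ (m - k) := by
    rw [mul_pow, ← pow_mul, ← pow_add]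
    have : k + (m - k) = m := by omega
    rw [this, hf, mul_comm]
  rw [← tr_pow q m hf (a * b ^ q ^ k) (m - k), h]

end helpers

/-- For an `F_{q^m}`-linear code `C ⊆ F_{q^m}^n`,
`Tr(C)^{⋆2} ⊆ Σ_{i=0}^{⌊m/2⌋} Tr(C ⋆ C^{q^i})`. -/
theorem stmt_2 (q m n : ℕ) (hm : 0 < m) (Fq Fqm : Type*) [Field Fq] [Field Fqm]
    [Fintype Fq] [Fintype Fqm] [Algebra Fq Fqm]
    (hq : Fintype.card Fq = q) (hqm : Fintype.card Fqm = q ^ m)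
    (C : Submodule Fqm (Fin n → Fqm)) :
    schurProd Fq (traceCode q m Fq C) (traceCode q m Fq C) ≤
      ∑ i ∈ Finset.range (m / 2 + 1),
        traceCode q m Fq (schurProd Fqm C (powCode C (q ^ i))) := by
  have hf : ∀ x : Fqm, x ^ q ^ m = x := by
    intro x; rw [← hqm]; exact FiniteField.pow_card x
  set RHS := ∑ i ∈ Finset.range (m / 2 + 1),
      traceCode q m Fq (schurProd Fqm C (powCode C (q ^ i))) with hRHS
  -- each summand is below RHS
  have hle : ∀ k ∈ Finset.range (m / 2 + 1),
      traceCode q m Fq (schurProd Fqm C (powCode C (q ^ k))) ≤ RHS := by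
    intro k hk
    exact Finset.single_le_sum (f := fun i =>
      traceCode q m Fq (schurProd Fqm C (powCode C (q ^ i)))) (fun i _ => bot_le) hk
  -- key membership: the trace of c * (c')^{q^k} with k ≤ m/2 is in RHS
  have hmem : ∀ k, k ≤ m / 2 → ∀ c ∈ C, ∀ c' ∈ C,
      (fun j => ∑ i ∈ Finset.range m, (c j * c' j ^ q ^ k) ^ q ^ i) ∈ RHS := by
    intro k hk c hc c' hc'
    apply hle k (Finset.mem_range.mpr (by omega))
    apply Submodule.subset_span
    refine ⟨(fun j => c j * c' j ^ q ^ k), ?_, rfl⟩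
    apply Submodule.subset_span
    refine ⟨c, hc, (fun j => c' j ^ q ^ k), ?_, rfl⟩
    exact Submodule.subset_span ⟨c', hc', rfl⟩
  -- base case : product of two trace generators is in RHS
  have hbase : ∀ c ∈ C, ∀ c' ∈ C,
      ((fun j => ∑ i ∈ Finset.range m, c j ^ q ^ i) *
        (fun j => ∑ i ∈ Finset.range m, c' j ^ q ^ i) : Fin n → Fqm) ∈ RHS := by
    intro c hc c' hc'
    have heq : ((fun j => ∑ i ∈ Finset.range m, c j ^ q ^ i) *
        (fun j => ∑ i ∈ Finset.range m, c' j ^ q ^ i) : Fin n → Fqm)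
        = ∑ k ∈ Finset.range m,
            (fun j => ∑ i ∈ Finset.range m, (c j * c' j ^ q ^ k) ^ q ^ i) := by
      funext j
      rw [Pi.mul_apply, key1 q m hf (c j) (c' j)]
      rw [Finset.sum_apply]
    rw [heq]
    apply Submodule.sum_mem
    intro k hk
    rcases le_or_gt k (m / 2) with h | h
    · exact hmem k h c hc c' hc'
    · have hkm : k ≤ m := le_of_lt (Finset.mem_range.mp hk)
      have heq2 : (fun j => ∑ i ∈ Finset.range m, (c j * c' j ^ q ^ k) ^ q ^ i)
          = (fun j => ∑ i ∈ Finset.range m, (c' j * c j ^ q ^ (m - k)) ^ q ^ i) := by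
        funext j; exact key2 q m hf (c j) (c' j) k hkm
      rw [heq2]
      exact hmem (m - k) (by omega) c' hc' c hc
  -- now unfold the span of products
  rw [schurProd, Submodule.span_le]
  rintro x ⟨a, ha, b, hb, rfl⟩
  -- first: a a generator, b in span
  have step1 : ∀ a' ∈ {x : Fin n → Fqm | ∃ c ∈ C,
      x = fun j => ∑ i ∈ Finset.range m, c j ^ q ^ i}, a' * b ∈ RHS := by
    intro a' ha'
    refine Submodule.span_induction (p := fun b _ => a' * b ∈ RHS) ?_ ?_ ?_ ?_ hb
    · rintro y ⟨c', hc', rfl⟩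
      obtain ⟨c, hc, rfl⟩ := ha'
      exact hbase c hc c' hc'
    · simpa using Submodule.zero_mem RHS
    · intro y z _ _ hy hz
      rw [mul_add]; exact Submodule.add_mem RHS hy hz
    · intro r y _ hy
      rw [Algebra.mul_smul_comm]; exact Submodule.smul_mem RHS r hy
  refine Submodule.span_induction (p := fun a _ => a * b ∈ RHS) ?_ ?_ ?_ ?_ ha
  · exact step1
  · simpa using Submodule.zero_mem RHS
  · intro y z _ _ hy hz
    rw [add_mul]; exact Submodule.add_mem RHS hy hz
  · intro r y _ hy
    rw [Algebra.smul_mul_assoc]; exact Submodule.smul_mem RHS r hy
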